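/- Let G = ⟨a⟩ be cyclic of order 2 and e ≥ 1. Then (a − 1)^2 = −2(a − 1) in Z_{2^e}G, the unit 1 + 2(a − 1) has order 2^{e−1}, and V(Z_{2^e}G) = ⟨a⟩ × ⟨1 + 2(a−1)⟩ ≅ C_2 × C_{2^{e−1}}. -/

import Mathlib

/-- The augmentation map of a group ring. -/
noncomputable def aug (R G : Type*) [CommRing R] [CommGroup G] :
    MonoidAlgebra R G →ₐ[R] R := MonoidAlgebra.lift (R := R) (M := G) (A := R) 1

/-- The group of normalized units of a group ring. -/
noncomputable def Vgrp (R G : Type*) [CommRing R] [CommGroup G] :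
    Subgroup (MonoidAlgebra R G)ˣ :=
  MonoidHom.ker (Units.map ((aug R G).toRingHom : MonoidAlgebra R G →* R))

/-- The canonical embedding of `G` into the unit group of its group ring. -/
noncomputable def iota (R G : Type*) [CommRing R] [CommGroup G] :
    G →* (MonoidAlgebra R G)ˣ :=
  (Units.map (MonoidAlgebra.of R G)).comp (toUnits : G ≃* Gˣ).toMonoidHom

namespace Stmt15

def kseq : ℕ → ℤ
  | 0 => 0
  | n + 1 => 1 - 3 * kseq n

lemma four_kseq (n : ℕ) : 4 * kseq n = 1 - (-3) ^ n := by
  induction n with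
  | zero => simp [kseq]
  | succ n ih => rw [kseq, pow_succ]; linarith [ih]

lemma kseq_double (n : ℕ) : kseq (2 * n) = 2 * kseq n * (1 - 2 * kseq n) := by
  have h1 := four_kseq n
  have h2 := four_kseq (2 * n)
  rw [two_mul, pow_add] at h2
  have h3 : (4 : ℤ) * kseq (n + n) = 4 * (2 * kseq n * (1 - 2 * kseq n)) := by
    linear_combination h2 + (4 * kseq n - 1 - (-3) ^ n) * h1
  rw [two_mul]
  exact mul_left_cancel₀ (by norm_num) h3

lemma kseq_two_pow (m : ℕ) : ∃ c : ℤ, Odd c ∧ kseq (2 ^ m) = 2 ^ m * c := by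
  induction m with
  | zero => exact ⟨1, odd_one, by simp [kseq]⟩
  | succ m ih =>
    obtain ⟨c, hc, h⟩ := ih
    refine ⟨c * (1 - 2 * kseq (2 ^ m)), hc.mul ⟨-kseq (2 ^ m), by ring⟩, ?_⟩
    rw [pow_succ, mul_comm (2 ^ m) 2, kseq_double, h]
    ring

section GroupRing

variable {R : Type*} [CommRing R] {G : Type*} [CommGroup G]

noncomputable def elt (a : G) (r s : R) : MonoidAlgebra R G :=
  MonoidAlgebra.single 1 r + MonoidAlgebra.single a s

variable {a : G}

lemma elt_apply_one (hne : a ≠ 1) (r s : R) : (elt a r s).coeff 1 = r := by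
  show (Finsupp.single 1 r + Finsupp.single a s : G →₀ R) 1 = r
  simp [Finsupp.single_eq_of_ne' hne]

lemma elt_apply_a (hne : a ≠ 1) (r s : R) : (elt a r s).coeff a = s := by
  show (Finsupp.single 1 r + Finsupp.single a s : G →₀ R) a = s
  simp [Finsupp.single_eq_of_ne' (Ne.symm hne)]

lemma eq_elt (hne : a ≠ 1) (hgen : ∀ g : G, g = 1 ∨ g = a) (x : MonoidAlgebra R G) :
    x = elt a (x.coeff 1) (x.coeff a) := by
  classical
  ext g
  show x.coeff g = (Finsupp.single 1 (x.coeff 1) + Finsupp.single a (x.coeff a) : G →₀ R) g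
  rcases hgen g with h | h <;> subst h <;> simp [Finsupp.single_apply, hne, Ne.symm hne]

lemma elt_mul (ha2 : a * a = 1) (r s r' s' : R) :
    elt a r s * elt a r' s' = elt a (r * r' + s * s') (r * s' + s * r') := by
  simp only [elt, add_mul, mul_add, MonoidAlgebra.single_mul_single, one_mul, mul_one, ha2,
    MonoidAlgebra.single_add]
  abel

lemma elt_add (r s r' s' : R) : elt a r s + elt a r' s' = elt a (r + r') (s + s') := by
  simp only [elt, MonoidAlgebra.single_add]; abel

lemma elt_neg (r s : R) : -elt a r s = elt a (-r) (-s) := by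
  simp [elt, Finsupp.single_neg]; abel

lemma elt_sub (r s r' s' : R) : elt a r s - elt a r' s' = elt a (r - r') (s - s') := by
  rw [sub_eq_add_neg, elt_neg, elt_add, sub_eq_add_neg, sub_eq_add_neg]

lemma one_eq_elt : (1 : MonoidAlgebra R G) = elt a 1 0 := by
  simp [elt, MonoidAlgebra.one_def]

lemma of_eq_elt : MonoidAlgebra.of R G a = elt a (0 : R) 1 := by
  simp [elt, MonoidAlgebra.of_apply]

lemma aug_elt (r s : R) : aug R G (elt a r s) = r + s := by
  simp [aug, elt, MonoidAlgebra.lift_single]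

lemma u_pow (ha2 : a * a = 1) (n : ℕ) :
    (elt a (-1 : R) 2) ^ n = elt a ((1 - 2 * kseq n : ℤ) : R) ((2 * kseq n : ℤ) : R) := by
  induction n with
  | zero => rw [pow_zero, one_eq_elt (a := a)]; norm_num [kseq]
  | succ n ih =>
    rw [pow_succ, ih, elt_mul ha2]
    have h1 : ((1 - 2 * kseq n : ℤ) : R) * (-1) + ((2 * kseq n : ℤ) : R) * 2
        = ((1 - 2 * kseq (n + 1) : ℤ) : R) := by rw [kseq]; push_cast; ring
    have h2 : ((1 - 2 * kseq n : ℤ) : R) * 2 + ((2 * kseq n : ℤ) : R) * (-1)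
        = ((2 * kseq (n + 1) : ℤ) : R) := by rw [kseq]; push_cast; ring
    rw [h1, h2]

lemma mem_Vgrp_iff (v : (MonoidAlgebra R G)ˣ) :
    v ∈ Vgrp R G ↔ aug R G (v : MonoidAlgebra R G) = 1 := by
  simp [Vgrp, MonoidHom.mem_ker, Units.ext_iff]

lemma iota_val : ((iota R G a : (MonoidAlgebra R G)ˣ) : MonoidAlgebra R G)
    = MonoidAlgebra.of R G a := rfl

end GroupRing

end Stmt15

open Stmt15

/-- For `G = ⟨a⟩` cyclic of order `2`: `(a-1)^2 = -2(a-1)` in `Z_{2^e}G`, the unit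
`1 + 2(a-1)` has order `2^{e-1}`, and `V(Z_{2^e}G) = ⟨a⟩ × ⟨1 + 2(a-1)⟩ ≅
C_2 × C_{2^{e-1}}`. -/
theorem stmt_15 (e : ℕ) (he : 1 ≤ e)
    (G : Type*) [CommGroup G] [Fintype G] (a : G)
    (ha : orderOf a = 2) (hgen : ∀ g : G, g = 1 ∨ g = a) :
    (MonoidAlgebra.of (ZMod (2 ^ e)) G a - 1) ^ 2 =
        -(2 : MonoidAlgebra (ZMod (2 ^ e)) G) * (MonoidAlgebra.of (ZMod (2 ^ e)) G a - 1) ∧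
      ∃ u : (MonoidAlgebra (ZMod (2 ^ e)) G)ˣ,
        (u : MonoidAlgebra (ZMod (2 ^ e)) G) =
            1 + 2 * (MonoidAlgebra.of (ZMod (2 ^ e)) G a - 1) ∧
          orderOf u = 2 ^ (e - 1) ∧
          u ∈ Vgrp (ZMod (2 ^ e)) G ∧
          (∀ v ∈ Vgrp (ZMod (2 ^ e)) G, ∃ i j : ℕ,
            v = iota (ZMod (2 ^ e)) G a ^ i * u ^ j) ∧
          Nat.card (Vgrp (ZMod (2 ^ e)) G) = 2 ^ e := by
  classical
  haveI : NeZero (2 ^ e) := ⟨by positivity⟩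
  haveI : NeZero (2 ^ (e - 1)) := ⟨by positivity⟩
  have hne : a ≠ 1 := by intro h; rw [h, orderOf_one] at ha; omega
  have ha2 : a * a = 1 := by
    have := pow_orderOf_eq_one a; rwa [ha, pow_two] at this
  have he1 : e - 1 + 1 = e := by omega
  have hpow2 : (2 : ℤ) ^ e = 2 * 2 ^ (e - 1) := by
    conv_lhs => rw [← he1]
    rw [pow_succ]; ring
  have hofa : MonoidAlgebra.of (ZMod (2 ^ e)) G a = elt a (0 : ZMod (2 ^ e)) 1 := of_eq_elt
  have h1A : (1 : MonoidAlgebra (ZMod (2 ^ e)) G) = elt a 1 0 := one_eq_elt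
  have h2A : (2 : MonoidAlgebra (ZMod (2 ^ e)) G) = elt a 2 0 := by
    rw [show (2 : MonoidAlgebra (ZMod (2 ^ e)) G) = 1 + 1 from by norm_num, h1A, elt_add]
    norm_num
  constructor
  · rw [hofa, h1A, elt_sub, pow_two, elt_mul ha2, h2A, elt_neg, elt_mul ha2]
    norm_num
  set x : MonoidAlgebra (ZMod (2 ^ e)) G := elt a (-1) 2 with hxdef
  -- x ^ 2^(e-1) = 1
  have hcast0 : ((2 * kseq (2 ^ (e - 1)) : ℤ) : ZMod (2 ^ e)) = 0 := by
    obtain ⟨c, hc, hkc⟩ := kseq_two_pow (e - 1)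
    rw [ZMod.intCast_zmod_eq_zero_iff_dvd, hkc]
    refine ⟨c, ?_⟩
    push_cast
    rw [hpow2]
    ring
  have hxpow : x ^ 2 ^ (e - 1) = 1 := by
    rw [hxdef, u_pow ha2]
    have hfst : ((1 - 2 * kseq (2 ^ (e - 1)) : ℤ) : ZMod (2 ^ e))
        = 1 - ((2 * kseq (2 ^ (e - 1)) : ℤ) : ZMod (2 ^ e)) := by push_cast; ring
    rw [hfst, hcast0, sub_zero]
    exact one_eq_elt.symm
  -- if x^(2^m) = 1 then e - 1 ≤ m
  have hxne : ∀ m : ℕ, x ^ 2 ^ m = 1 → e - 1 ≤ m := by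
    intro m hm
    obtain ⟨d, hd, hkd⟩ := kseq_two_pow m
    rw [hxdef, u_pow ha2, h1A] at hm
    have hs : ((2 * kseq (2 ^ m) : ℤ) : ZMod (2 ^ e)) = 0 := by
      have h' := congrArg (fun f : MonoidAlgebra (ZMod (2 ^ e)) G => f.coeff a) hm
      simpa [elt_apply_a hne] using h'
    rw [ZMod.intCast_zmod_eq_zero_iff_dvd, hkd] at hs
    by_contra hlt
    push_neg at hlt
    have h2 : ((2 : ℤ) ^ (m + 2)) ∣ 2 ^ e := pow_dvd_pow 2 (by omega)
    have h3 : ((2 : ℤ) ^ (m + 2)) ∣ 2 ^ (m + 1) * d := by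
      have heq : (2 : ℤ) * (2 ^ m * d) = 2 ^ (m + 1) * d := by ring
      rw [heq] at hs
      push_cast at hs
      exact h2.trans hs
    have h4 : (2 : ℤ) ∣ d := by
      have h5 : (2 : ℤ) ^ (m + 1) * 2 ∣ 2 ^ (m + 1) * d := by
        rw [show (2 : ℤ) ^ (m + 1) * 2 = 2 ^ (m + 2) by ring]; exact h3
      exact (mul_dvd_mul_iff_left (a := (2 : ℤ) ^ (m + 1)) (by positivity)).mp h5
    obtain ⟨t, ht⟩ := h4
    obtain ⟨t', ht'⟩ := hd
    omega
  have horder : orderOf x = 2 ^ (e - 1) := by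
    have hdvd := orderOf_dvd_of_pow_eq_one hxpow
    obtain ⟨m, hm, hmem⟩ := (Nat.dvd_prime_pow Nat.prime_two).mp hdvd
    have hx0 : x ^ 2 ^ m = 1 := by rw [← hmem]; exact pow_orderOf_eq_one x
    have := hxne m hx0
    rw [hmem]; congr 1; omega
  have hu : IsUnit x := IsUnit.of_pow_eq_one hxpow (by positivity)
  have huval : (hu.unit : MonoidAlgebra (ZMod (2 ^ e)) G) = x := hu.unit_spec
  have horderu : orderOf hu.unit = 2 ^ (e - 1) := by
    rw [← orderOf_units, huval, horder]
  -- key surjectivity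
  have key : ∀ t : ℤ, ∃ j : ℕ,
      ((2 * kseq j : ℤ) : ZMod (2 ^ e)) = ((2 * t : ℤ) : ZMod (2 ^ e)) := by
    intro t
    have hcoords : ∀ p q : ℕ, (2 ^ (e - 1) : ℤ) ∣ kseq q - kseq p → x ^ p = x ^ q := by
      intro p q hdvd
      obtain ⟨d, hd⟩ := hdvd
      have hmul : ((2 * kseq p : ℤ) : ZMod (2 ^ e)) = ((2 * kseq q : ℤ) : ZMod (2 ^ e)) := by
        rw [ZMod.intCast_eq_intCast_iff_dvd_sub]
        refine ⟨d, ?_⟩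
        push_cast
        rw [hpow2]
        linear_combination 2 * hd
      have hone : ((1 - 2 * kseq p : ℤ) : ZMod (2 ^ e))
          = ((1 - 2 * kseq q : ℤ) : ZMod (2 ^ e)) := by
        have e1 : ((1 - 2 * kseq p : ℤ) : ZMod (2 ^ e))
            = 1 - ((2 * kseq p : ℤ) : ZMod (2 ^ e)) := by push_cast; ring
        have e2 : ((1 - 2 * kseq q : ℤ) : ZMod (2 ^ e))
            = 1 - ((2 * kseq q : ℤ) : ZMod (2 ^ e)) := by push_cast; ring
        rw [e1, e2, hmul]
      rw [hxdef, u_pow ha2, u_pow ha2, hmul, hone]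
    have hinj : Function.Injective
        (fun z : ZMod (2 ^ (e - 1)) => ((kseq z.val : ℤ) : ZMod (2 ^ (e - 1)))) := by
      intro z w hzw
      simp only [ZMod.intCast_eq_intCast_iff] at hzw
      have hdvd : ((2 ^ (e - 1) : ℕ) : ℤ) ∣ kseq w.val - kseq z.val := Int.ModEq.dvd hzw
      have hxx := hcoords z.val w.val (by exact_mod_cast hdvd)
      have huu : hu.unit ^ z.val = hu.unit ^ w.val := by
        apply Units.ext
        simpa [huval] using hxx
      rw [pow_eq_pow_iff_modEq, horderu, Nat.ModEq,
        Nat.mod_eq_of_lt (ZMod.val_lt z), Nat.mod_eq_of_lt (ZMod.val_lt w)] at huu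
      have := congrArg (Nat.cast : ℕ → ZMod (2 ^ (e - 1))) huu
      rwa [ZMod.natCast_rightInverse z, ZMod.natCast_rightInverse w] at this
    have hsurj := Finite.injective_iff_surjective.mp hinj
    obtain ⟨z, hz⟩ := hsurj ((t : ZMod (2 ^ (e - 1))))
    refine ⟨z.val, ?_⟩
    simp only [ZMod.intCast_eq_intCast_iff] at hz
    obtain ⟨d, hdd⟩ := Int.ModEq.dvd hz
    rw [ZMod.intCast_eq_intCast_iff_dvd_sub]
    refine ⟨d, ?_⟩
    push_cast
    push_cast at hdd
    rw [hpow2]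
    linear_combination 2 * hdd
  -- cover
  have hiota : ((iota (ZMod (2 ^ e)) G a : (MonoidAlgebra (ZMod (2 ^ e)) G)ˣ) :
      MonoidAlgebra (ZMod (2 ^ e)) G) = elt a 0 1 := by
    rw [iota_val, hofa]
  have cover : ∀ s : ZMod (2 ^ e), ∃ i j : ℕ,
      ((iota (ZMod (2 ^ e)) G a ^ i * hu.unit ^ j :
        (MonoidAlgebra (ZMod (2 ^ e)) G)ˣ) : MonoidAlgebra (ZMod (2 ^ e)) G)
      = elt a (1 - s) s := by
    intro s
    rcases Nat.even_or_odd s.val with hpar | hpar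
    · obtain ⟨t, ht⟩ := hpar
      obtain ⟨j, hj⟩ := key t
      refine ⟨0, j, ?_⟩
      have hs : ((2 * (t : ℤ) : ℤ) : ZMod (2 ^ e)) = s := by
        push_cast
        rw [show ((2 : ZMod (2 ^ e)) * t) = ((t + t : ℕ) : ZMod (2 ^ e)) from by push_cast; ring,
          ← ht, ZMod.natCast_rightInverse s]
      rw [pow_zero, one_mul, Units.val_pow_eq_pow_val, huval, hxdef, u_pow ha2]
      have hfst : ((1 - 2 * kseq j : ℤ) : ZMod (2 ^ e))
          = 1 - ((2 * kseq j : ℤ) : ZMod (2 ^ e)) := by push_cast; ring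
      rw [hfst, hj, hs]
    · obtain ⟨t, ht⟩ := hpar
      obtain ⟨j, hj⟩ := key (-(t : ℤ))
      refine ⟨1, j, ?_⟩
      have hsval : s = ((2 * t + 1 : ℕ) : ZMod (2 ^ e)) := by
        rw [← ht, ZMod.natCast_rightInverse s]
      have hs2 : ((2 * kseq j : ℤ) : ZMod (2 ^ e)) = 1 - s := by
        rw [hj, hsval]; push_cast; ring
      have hs1 : ((1 - 2 * kseq j : ℤ) : ZMod (2 ^ e)) = s := by
        have hfst : ((1 - 2 * kseq j : ℤ) : ZMod (2 ^ e))
            = 1 - ((2 * kseq j : ℤ) : ZMod (2 ^ e)) := by push_cast; ring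
        rw [hfst, hs2]; ring
      rw [pow_one, Units.val_mul, Units.val_pow_eq_pow_val, huval, hxdef, u_pow ha2, hiota,
        elt_mul ha2, hs1, hs2]
      congr 1 <;> ring
  have humem : hu.unit ∈ Vgrp (ZMod (2 ^ e)) G := by
    rw [mem_Vgrp_iff, huval, hxdef, aug_elt]; norm_num
  have hamem : iota (ZMod (2 ^ e)) G a ∈ Vgrp (ZMod (2 ^ e)) G := by
    rw [mem_Vgrp_iff, hiota, aug_elt]; norm_num
  refine ⟨hu.unit, ?_, horderu, humem, ?_, ?_⟩
  · rw [huval, hxdef, hofa, h1A, elt_sub, h2A, elt_mul ha2, elt_add]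
    norm_num
  · -- generation
    intro v hv
    set sv : ZMod (2 ^ e) := (v : MonoidAlgebra (ZMod (2 ^ e)) G).coeff a with hsv
    set rv : ZMod (2 ^ e) := (v : MonoidAlgebra (ZMod (2 ^ e)) G).coeff 1 with hrv
    have hvrep : (v : MonoidAlgebra (ZMod (2 ^ e)) G) = elt a rv sv := eq_elt hne hgen _
    have haug : aug (ZMod (2 ^ e)) G (v : MonoidAlgebra (ZMod (2 ^ e)) G) = 1 :=
      (mem_Vgrp_iff v).mp hv
    rw [hvrep, aug_elt] at haug
    obtain ⟨i, j, hij⟩ := cover sv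
    refine ⟨i, j, Units.ext ?_⟩
    rw [hij, hvrep]
    congr 1
    linear_combination haug
  · -- cardinality
    have hbij : Function.Bijective (fun v : (Vgrp (ZMod (2 ^ e)) G) =>
        ((v : (MonoidAlgebra (ZMod (2 ^ e)) G)ˣ) : MonoidAlgebra (ZMod (2 ^ e)) G).coeff a) := by
      constructor
      · intro v w hvw
        set s1 : ZMod (2 ^ e) :=
          ((v : (MonoidAlgebra (ZMod (2 ^ e)) G)ˣ) : MonoidAlgebra (ZMod (2 ^ e)) G).coeff a with hs1
        set r1 : ZMod (2 ^ e) :=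
          ((v : (MonoidAlgebra (ZMod (2 ^ e)) G)ˣ) : MonoidAlgebra (ZMod (2 ^ e)) G).coeff 1 with hr1
        set s2 : ZMod (2 ^ e) :=
          ((w : (MonoidAlgebra (ZMod (2 ^ e)) G)ˣ) : MonoidAlgebra (ZMod (2 ^ e)) G).coeff a with hs2
        set r2 : ZMod (2 ^ e) :=
          ((w : (MonoidAlgebra (ZMod (2 ^ e)) G)ˣ) : MonoidAlgebra (ZMod (2 ^ e)) G).coeff 1 with hr2
        have hvw' : s1 = s2 := hvw
        have hvrep : ((v : (MonoidAlgebra (ZMod (2 ^ e)) G)ˣ) :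
            MonoidAlgebra (ZMod (2 ^ e)) G) = elt a r1 s1 := eq_elt hne hgen _
        have hwrep : ((w : (MonoidAlgebra (ZMod (2 ^ e)) G)ˣ) :
            MonoidAlgebra (ZMod (2 ^ e)) G) = elt a r2 s2 := eq_elt hne hgen _
        have hv1 : aug (ZMod (2 ^ e)) G ((v : (MonoidAlgebra (ZMod (2 ^ e)) G)ˣ) :
            MonoidAlgebra (ZMod (2 ^ e)) G) = 1 := (mem_Vgrp_iff _).mp v.2
        have hw1 : aug (ZMod (2 ^ e)) G ((w : (MonoidAlgebra (ZMod (2 ^ e)) G)ˣ) :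
            MonoidAlgebra (ZMod (2 ^ e)) G) = 1 := (mem_Vgrp_iff _).mp w.2
        rw [hvrep, aug_elt] at hv1
        rw [hwrep, aug_elt] at hw1
        apply Subtype.ext
        apply Units.ext
        rw [hvrep, hwrep, hvw']
        congr 1
        linear_combination hv1 - hw1 - hvw'
      · intro s
        obtain ⟨i, j, hij⟩ := cover s
        refine ⟨⟨iota (ZMod (2 ^ e)) G a ^ i * hu.unit ^ j,
          mul_mem (pow_mem hamem i) (pow_mem humem j)⟩, ?_⟩
        show ((iota (ZMod (2 ^ e)) G a ^ i * hu.unit ^ j :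
          (MonoidAlgebra (ZMod (2 ^ e)) G)ˣ) : MonoidAlgebra (ZMod (2 ^ e)) G).coeff a = s
        rw [hij, elt_apply_a hne]
    rw [Nat.card_eq_of_bijective _ hbij, Nat.card_zmod]
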